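/- Weak bisimilarity is a setoid predicate: for any resumptions r, r', r*, r*', if r ≅ r', r ≈ r* and r* ≅ r*', then r' ≈ r*'. -/

import Mathlib

/-! Core definitions: delayful resumptions as an M-type, strong bisimilarity,
convergence, divergence, responsiveness, committedness, weak bisimilarities. -/

abbrev state := String → ℤ

/-- Shapes of the polynomial functor for delayful resumptions. -/
inductive RShape where
  | ret (σ : state)
  | inp
  | out (v : ℤ)
  | delay

/-- The polynomial functor X ↦ state ⊕ (ℤ → X) ⊕ (ℤ × X) ⊕ X. -/
def ResPF : PFunctor :=
  ⟨RShape, fun s => match s with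
    | .ret _ => PEmpty
    | .inp => ℤ
    | .out _ => PUnit
    | .delay => PUnit⟩

/-- Delayful resumptions: the final coalgebra (M-type) of `ResPF`. -/
def Res : Type := ResPF.M

namespace Res

def ret (σ : state) : Res := PFunctor.M.mk ⟨RShape.ret σ, PEmpty.elim⟩

def inp (f : ℤ → Res) : Res := PFunctor.M.mk ⟨RShape.inp, f⟩

def out (v : ℤ) (r : Res) : Res := PFunctor.M.mk ⟨RShape.out v, fun _ => r⟩

def delay (r : Res) : Res := PFunctor.M.mk ⟨RShape.delay, fun _ => r⟩

/-- The silently diverging resumption ⊥, satisfying ⊥ = δ ⊥. -/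
def bot : Res := PFunctor.M.corec (fun _ : Unit => ⟨RShape.delay, fun _ => ()⟩) ()

end Res

/-- One step of strong bisimilarity. -/
def BisimF (R : Res → Res → Prop) (r r₁ : Res) : Prop :=
  (∃ σ, r = Res.ret σ ∧ r₁ = Res.ret σ) ∨
  (∃ f f₁, r = Res.inp f ∧ r₁ = Res.inp f₁ ∧ ∀ v, R (f v) (f₁ v)) ∨
  (∃ v a a₁, r = Res.out v a ∧ r₁ = Res.out v a₁ ∧ R a a₁) ∨
  (∃ a a₁, r = Res.delay a ∧ r₁ = Res.delay a₁ ∧ R a a₁)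

/-- Strong bisimilarity ≅: the greatest relation closed under `BisimF`. -/
def Bisim (r r₁ : Res) : Prop :=
  ∃ R : Res → Res → Prop, (∀ x y, R x y → BisimF R x y) ∧ R r r₁

/-- Convergence r ⇓ r': r converges in finitely many delay steps to a
resumption that has terminated or performs an observable action. -/
inductive Conv : Res → Res → Prop where
  | ret (σ : state) : Conv (Res.ret σ) (Res.ret σ)
  | inp {f f₁ : ℤ → Res} : (∀ v, Bisim (f v) (f₁ v)) → Conv (Res.inp f) (Res.inp f₁)
  | out {v : ℤ} {r r₁ : Res} : Bisim r r₁ → Conv (Res.out v r) (Res.out v r₁)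
  | delay {r r' : Res} : Conv r r' → Conv (Res.delay r) r'

/-- Divergence r ⇑: r silently diverges (greatest predicate with δ r ⇑ whenever r ⇑). -/
def Diverge (r : Res) : Prop :=
  ∃ P : Res → Prop, (∀ x, P x → ∃ x', x = Res.delay x' ∧ P x') ∧ P r

/-- One step of responsiveness. -/
def RespF (P : Res → Prop) (r : Res) : Prop :=
  (∃ σ, Conv r (Res.ret σ)) ∨
  (∃ f, Conv r (Res.inp f) ∧ ∀ v, P (f v)) ∨
  (∃ v r', Conv r (Res.out v r') ∧ P r')

/-- Responsiveness ↓↓ r: the greatest predicate closed under `RespF`. -/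
def Resp (r : Res) : Prop :=
  ∃ P : Res → Prop, (∀ x, P x → RespF P x) ∧ P r

/-- One step of committedness: responsiveness with a divergence option. -/
def CommF (P : Res → Prop) (r : Res) : Prop :=
  (∃ σ, Conv r (Res.ret σ)) ∨
  (∃ f, Conv r (Res.inp f) ∧ ∀ v, P (f v)) ∨
  (∃ v r', Conv r (Res.out v r') ∧ P r') ∨
  Diverge r

/-- Committedness ⇕ r: the greatest predicate closed under `CommF`. -/
def Comm (r : Res) : Prop :=
  ∃ P : Res → Prop, (∀ x, P x → CommF P x) ∧ P r

/-- One step of (termination-sensitive) weak bisimilarity. -/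
def WBisimF (R : Res → Res → Prop) (r r₁ : Res) : Prop :=
  (∃ σ, Conv r (Res.ret σ) ∧ Conv r₁ (Res.ret σ)) ∨
  (∃ f f₁, Conv r (Res.inp f) ∧ Conv r₁ (Res.inp f₁) ∧ ∀ v, R (f v) (f₁ v)) ∨
  (∃ v a a₁, Conv r (Res.out v a) ∧ Conv r₁ (Res.out v a₁) ∧ R a a₁) ∨
  (∃ a a₁, r = Res.delay a ∧ r₁ = Res.delay a₁ ∧ R a a₁)

/-- Weak bisimilarity ≈: the greatest relation closed under `WBisimF`. -/
def WBisim (r r₁ : Res) : Prop :=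
  ∃ R : Res → Res → Prop, (∀ x y, R x y → WBisimF R x y) ∧ R r r₁

/-- The inductive part ≈↓(X) of the second formulation of weak bisimilarity. -/
inductive WBisimI (X : Res → Res → Prop) : Res → Res → Prop where
  | ret (σ : state) : WBisimI X (Res.ret σ) (Res.ret σ)
  | out {v r r₁} : X r r₁ → WBisimI X (Res.out v r) (Res.out v r₁)
  | inp {f f₁} : (∀ v, X (f v) (f₁ v)) → WBisimI X (Res.inp f) (Res.inp f₁)
  | delayL {r r₁} : WBisimI X r r₁ → WBisimI X (Res.delay r) r₁
  | delayR {r r₁} : WBisimI X r r₁ → WBisimI X r (Res.delay r₁)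

/-- One step of the second (Mendler-style) formulation ≈° of weak bisimilarity. -/
def WBisimOF (R : Res → Res → Prop) (r r₁ : Res) : Prop :=
  (∃ X : Res → Res → Prop, (∀ x y, X x y → R x y) ∧ WBisimI X r r₁) ∨
  (∃ a a₁, r = Res.delay a ∧ r₁ = Res.delay a₁ ∧ R a a₁)

/-- The second formulation ≈° of weak bisimilarity (induction nested into coinduction). -/
def WBisimO (r r₁ : Res) : Prop :=
  ∃ R : Res → Res → Prop, (∀ x y, R x y → WBisimOF R x y) ∧ R r r₁

/-- One step of classical-style weak bisimilarity. -/
def WBisimClF (R : Res → Res → Prop) (r r₁ : Res) : Prop :=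
  (∃ σ, Conv r (Res.ret σ) ∧ Conv r₁ (Res.ret σ)) ∨
  (∃ v a a₁, Conv r (Res.out v a) ∧ Conv r₁ (Res.out v a₁) ∧ R a a₁) ∨
  (∃ f f₁, Conv r (Res.inp f) ∧ Conv r₁ (Res.inp f₁) ∧ ∀ v, R (f v) (f₁ v)) ∨
  (Diverge r ∧ Diverge r₁)

/-- Classical-style weak bisimilarity ≈c. -/
def WBisimCl (r r₁ : Res) : Prop :=
  ∃ R : Res → Res → Prop, (∀ x y, R x y → WBisimClF R x y) ∧ R r r₁

section Aux

open Res

private lemma shape_eq {s s' : RShape} {g g'}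
    (h : (PFunctor.M.mk ⟨s, g⟩ : Res) = PFunctor.M.mk ⟨s', g'⟩) : s = s' := by
  have := PFunctor.M.mk_inj h
  injection this

private lemma ret_inj {σ σ'} (h : Res.ret σ = Res.ret σ') : σ = σ' := by
  have := shape_eq h; injection this

private lemma bisim_dest {r r₁ : Res} (h : Bisim r r₁) : BisimF Bisim r r₁ := by
  obtain ⟨R, hR, hr⟩ := h
  rcases hR _ _ hr with ⟨σ, h1, h2⟩ | ⟨f, f₁, h1, h2, h3⟩ | ⟨v, a, a₁, h1, h2, h3⟩ | ⟨a, a₁, h1, h2, h3⟩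
  · exact Or.inl ⟨σ, h1, h2⟩
  · exact Or.inr (Or.inl ⟨f, f₁, h1, h2, fun v => ⟨R, hR, h3 v⟩⟩)
  · exact Or.inr (Or.inr (Or.inl ⟨v, a, a₁, h1, h2, ⟨R, hR, h3⟩⟩))
  · exact Or.inr (Or.inr (Or.inr ⟨a, a₁, h1, h2, ⟨R, hR, h3⟩⟩))

private lemma bisim_refl (r : Res) : Bisim r r := by
  refine ⟨Eq, fun x y h => ?_, rfl⟩
  subst h
  rcases hx : x.dest with ⟨s, g⟩
  have hx' : x = PFunctor.M.mk ⟨s, g⟩ := by rw [← hx]; exact (PFunctor.M.mk_dest x).symm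
  cases s with
  | ret σ =>
    refine Or.inl ⟨σ, ?_, ?_⟩ <;>
    · rw [hx']; unfold Res.ret; congr 1; exact congrArg _ (funext fun e => e.elim)
  | inp => exact Or.inr (Or.inl ⟨g, g, hx', hx', fun v => rfl⟩)
  | out v =>
    exact Or.inr (Or.inr (Or.inl ⟨v, g PUnit.unit, g PUnit.unit, by
      rw [hx']; unfold Res.out; rfl, by rw [hx']; unfold Res.out; rfl, rfl⟩))
  | delay =>
    exact Or.inr (Or.inr (Or.inr ⟨g PUnit.unit, g PUnit.unit, by
      rw [hx']; unfold Res.delay; rfl, by rw [hx']; unfold Res.delay; rfl, rfl⟩))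

private lemma bisim_symm {r r₁ : Res} (h : Bisim r r₁) : Bisim r₁ r := by
  refine ⟨fun x y => Bisim y x, fun x y hxy => ?_, h⟩
  rcases bisim_dest hxy with ⟨σ, h1, h2⟩ | ⟨f, f₁, h1, h2, h3⟩ | ⟨v, a, a₁, h1, h2, h3⟩ | ⟨a, a₁, h1, h2, h3⟩
  · exact Or.inl ⟨σ, h2, h1⟩
  · exact Or.inr (Or.inl ⟨f₁, f, h2, h1, fun v => h3 v⟩)
  · exact Or.inr (Or.inr (Or.inl ⟨v, a₁, a, h2, h1, h3⟩))
  · exact Or.inr (Or.inr (Or.inr ⟨a₁, a, h2, h1, h3⟩))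

private lemma ret_ne_inp {σ f} : Res.ret σ ≠ Res.inp f := fun h => by
  have := shape_eq h; simp at this
private lemma ret_ne_out {σ v r} : Res.ret σ ≠ Res.out v r := fun h => by
  have := shape_eq h; simp at this
private lemma ret_ne_delay {σ r} : Res.ret σ ≠ Res.delay r := fun h => by
  have := shape_eq h; simp at this
private lemma inp_ne_out {f v r} : Res.inp f ≠ Res.out v r := fun h => by
  have := shape_eq h; simp at this
private lemma inp_ne_delay {f r} : Res.inp f ≠ Res.delay r := fun h => by
  have := shape_eq h; simp at this
private lemma out_ne_delay {v r r'} : Res.out v r ≠ Res.delay r' := fun h => by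
  have := shape_eq h; simp at this

private lemma inp_inj {f f'} (h : Res.inp f = Res.inp f') : f = f' := by
  have := PFunctor.M.mk_inj h
  injection this

private lemma out_inj {v v' r r'} (h : Res.out v r = Res.out v' r') : v = v' ∧ r = r' := by
  have := PFunctor.M.mk_inj h
  injection this with h1 h2
  injection h1 with h1
  exact ⟨h1, congr_fun h2 PUnit.unit⟩

private lemma delay_inj {r r'} (h : Res.delay r = Res.delay r') : r = r' := by
  have := PFunctor.M.mk_inj h
  injection this with h1 h2
  exact congr_fun h2 PUnit.unit

private lemma bisim_ret_left {σ x} (h : Bisim (Res.ret σ) x) : x = Res.ret σ := by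
  rcases bisim_dest h with ⟨σ', h1, h2⟩ | ⟨f, f₁, h1, _⟩ | ⟨v, a, a₁, h1, _⟩ | ⟨a, a₁, h1, _⟩
  · cases ret_inj h1; exact h2
  · exact absurd h1 ret_ne_inp
  · exact absurd h1 ret_ne_out
  · exact absurd h1 ret_ne_delay

private lemma bisim_inp_left {f x} (h : Bisim (Res.inp f) x) :
    ∃ f', x = Res.inp f' ∧ ∀ v, Bisim (f v) (f' v) := by
  rcases bisim_dest h with ⟨σ', h1, _⟩ | ⟨g, g₁, h1, h2, h3⟩ | ⟨v, a, a₁, h1, _⟩ | ⟨a, a₁, h1, _⟩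
  · exact absurd h1.symm ret_ne_inp
  · cases inp_inj h1; exact ⟨g₁, h2, h3⟩
  · exact absurd h1 inp_ne_out
  · exact absurd h1 inp_ne_delay

private lemma bisim_out_left {v a x} (h : Bisim (Res.out v a) x) :
    ∃ a', x = Res.out v a' ∧ Bisim a a' := by
  rcases bisim_dest h with ⟨σ', h1, _⟩ | ⟨g, g₁, h1, _⟩ | ⟨w, b, b₁, h1, h2, h3⟩ | ⟨b, b₁, h1, _⟩
  · exact absurd h1.symm ret_ne_out
  · exact absurd h1.symm inp_ne_out
  · obtain ⟨hv, hr⟩ := out_inj h1; subst hv; subst hr; exact ⟨b₁, h2, h3⟩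
  · exact absurd h1 out_ne_delay

private lemma bisim_delay_left {a x} (h : Bisim (Res.delay a) x) :
    ∃ a', x = Res.delay a' ∧ Bisim a a' := by
  rcases bisim_dest h with ⟨σ', h1, _⟩ | ⟨g, g₁, h1, _⟩ | ⟨w, b, b₁, h1, _⟩ | ⟨b, b₁, h1, h2, h3⟩
  · exact absurd h1.symm ret_ne_delay
  · exact absurd h1.symm inp_ne_delay
  · exact absurd h1.symm out_ne_delay
  · cases delay_inj h1; exact ⟨b₁, h2, h3⟩

private lemma bisim_trans {r r₁ r₂ : Res} (h : Bisim r r₁) (h' : Bisim r₁ r₂) :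
    Bisim r r₂ := by
  refine ⟨fun x z => ∃ y, Bisim x y ∧ Bisim y z, fun x z hxz => ?_, ⟨r₁, h, h'⟩⟩
  obtain ⟨y, hxy, hyz⟩ := hxz
  rcases bisim_dest hxy with ⟨σ, h1, h2⟩ | ⟨f, f₁, h1, h2, h3⟩ | ⟨v, a, a₁, h1, h2, h3⟩ | ⟨a, a₁, h1, h2, h3⟩ <;>
    subst h1 <;> subst h2
  · rw [bisim_ret_left hyz]; exact Or.inl ⟨σ, rfl, rfl⟩
  · obtain ⟨f₂, hz, h4⟩ := bisim_inp_left hyz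
    exact Or.inr (Or.inl ⟨f, f₂, rfl, hz, fun v => ⟨f₁ v, h3 v, h4 v⟩⟩)
  · obtain ⟨a₂, hz, h4⟩ := bisim_out_left hyz
    exact Or.inr (Or.inr (Or.inl ⟨v, a, a₂, rfl, hz, ⟨a₁, h3, h4⟩⟩))
  · obtain ⟨a₂, hz, h4⟩ := bisim_delay_left hyz
    exact Or.inr (Or.inr (Or.inr ⟨a, a₂, rfl, hz, ⟨a₁, h3, h4⟩⟩))

/-- Transport convergence along strong bisimilarity. -/
private lemma conv_of_bisim {r r' t : Res} (hc : Conv r t) (h : Bisim r r') :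
    Conv r' t := by
  induction hc generalizing r' with
  | ret σ => rw [bisim_ret_left h]; exact Conv.ret σ
  | inp hf =>
    obtain ⟨g, hz, h3⟩ := bisim_inp_left h
    rw [hz]; exact Conv.inp fun v => bisim_trans (bisim_symm (h3 v)) (hf v)
  | out hb =>
    obtain ⟨a', hz, h3⟩ := bisim_out_left h
    rw [hz]; exact Conv.out (bisim_trans (bisim_symm h3) hb)
  | delay _ ih =>
    obtain ⟨a', hz, h3⟩ := bisim_delay_left h
    rw [hz]; exact Conv.delay (ih h3)

end Aux

/-- Weak bisimilarity is a setoid predicate. -/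
theorem wbisim_setoid (r r' r₁ r₁' : Res)
    (h : Bisim r r') (hw : WBisim r r₁) (h₁ : Bisim r₁ r₁') :
    WBisim r' r₁' := by
  obtain ⟨R, hR, hr⟩ := hw
  refine ⟨fun x y => ∃ a b, Bisim a x ∧ R a b ∧ Bisim b y,
    fun x y ⟨a, b, hax, hab, hby⟩ => ?_, ⟨r, r₁, h, hr, h₁⟩⟩
  rcases hR _ _ hab with ⟨σ, c1, c2⟩ | ⟨f, f₁, c1, c2, c3⟩ | ⟨v, a2, b2, c1, c2, c3⟩ | ⟨a2, b2, c1, c2, c3⟩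
  · exact Or.inl ⟨σ, conv_of_bisim c1 hax, conv_of_bisim c2 hby⟩
  · exact Or.inr (Or.inl ⟨f, f₁, conv_of_bisim c1 hax, conv_of_bisim c2 hby,
      fun v => ⟨f v, f₁ v, bisim_refl _, c3 v, bisim_refl _⟩⟩)
  · exact Or.inr (Or.inr (Or.inl ⟨v, a2, b2, conv_of_bisim c1 hax, conv_of_bisim c2 hby,
      ⟨a2, b2, bisim_refl _, c3, bisim_refl _⟩⟩))
  · subst c1; subst c2
    rcases bisim_dest hax with ⟨σ', d1, _⟩ | ⟨g, g₁, d1, _⟩ | ⟨w, p, q, d1, _⟩ | ⟨p, x', d1, d2, d3⟩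
    · exact absurd d1.symm ret_ne_delay
    · exact absurd d1.symm inp_ne_delay
    · exact absurd d1.symm out_ne_delay
    cases delay_inj d1
    rcases bisim_dest hby with ⟨σ', e1, _⟩ | ⟨g, g₁, e1, _⟩ | ⟨w, p, q, e1, _⟩ | ⟨q, y', e1, e2, e3⟩
    · exact absurd e1.symm ret_ne_delay
    · exact absurd e1.symm inp_ne_delay
    · exact absurd e1.symm out_ne_delay
    cases delay_inj e1
    subst d2; subst e2
    exact Or.inr (Or.inr (Or.inr ⟨x', y', rfl, rfl, ⟨a2, b2, d3, c3, e3⟩⟩))
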